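/- Let P*_n(x,z) = Σ_{σ ∈ S_n} x^{jump(σ)} z^{lsuc(σ)} and F_n(x,z) = Σ_{σ ∈ S_n} x^{exc(σ)} z^{fix(σ)}. Then P*_n(x,z) = F_n(x,z) for all n ≥ 0 as polynomials in ℤ[x,z]. -/

import Mathlib

open Finset

/-- The value `σ(i)` of a permutation of `{1,…,n}` at a one-based position `i`,
with the convention `σ(0) = 0` (and value `0` outside `[1,n]`). -/
def pv {n : ℕ} (σ : Equiv.Perm (Fin n)) (i : ℕ) : ℕ :=
  if h : 1 ≤ i ∧ i ≤ n then ((σ ⟨i - 1, by omega⟩ : Fin n) : ℕ) + 1 else 0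

/-- Number of excedances: indices `i` with `σ(i) > i`. -/
def exc {n : ℕ} (σ : Equiv.Perm (Fin n)) : ℕ :=
  ((Finset.Icc 1 n).filter (fun i => i < pv σ i)).card

/-- Number of fixed points: indices `i` with `σ(i) = i`. -/
def fixpt {n : ℕ} (σ : Equiv.Perm (Fin n)) : ℕ :=
  ((Finset.Icc 1 n).filter (fun i => pv σ i = i)).card

/-- Number of left successions: indices `1 ≤ i ≤ n` with `σ(i-1) + 1 = σ(i)`. -/
def lsuc {n : ℕ} (σ : Equiv.Perm (Fin n)) : ℕ :=
  ((Finset.Icc 1 n).filter (fun i => pv σ (i - 1) + 1 = pv σ i)).card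

/-- Number of jumps: indices `1 ≤ i ≤ n` with `σ(i) ≥ σ(i-1) + 2`. -/
def jump {n : ℕ} (σ : Equiv.Perm (Fin n)) : ℕ :=
  ((Finset.Icc 1 n).filter (fun i => pv σ (i - 1) + 2 ≤ pv σ i)).card

open MvPolynomial

/-- `P*_n(x,z) = Σ_{σ ∈ S_n} x^{jump σ} z^{lsuc σ}` with `x = X 0`, `z = X 1`. -/
noncomputable def Pstar (n : ℕ) : MvPolynomial (Fin 2) ℤ :=
  ∑ σ : Equiv.Perm (Fin n), X 0 ^ jump σ * X 1 ^ lsuc σ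

/-- `F_n(x,z) = Σ_{σ ∈ S_n} x^{exc σ} z^{fix σ}`. -/
noncomputable def Fxz (n : ℕ) : MvPolynomial (Fin 2) ℤ :=
  ∑ σ : Equiv.Perm (Fin n), X 0 ^ exc σ * X 1 ^ fixpt σ

-- basic pv lemmas
theorem pv_zero {n : ℕ} (σ : Equiv.Perm (Fin n)) : pv σ 0 = 0 := by simp [pv]

theorem pv_of_big {n : ℕ} (σ : Equiv.Perm (Fin n)) {i : ℕ} (h : n < i) : pv σ i = 0 := by
  simp only [pv]; rw [dif_neg]; omega

theorem pv_le {n : ℕ} (σ : Equiv.Perm (Fin n)) (i : ℕ) : pv σ i ≤ n := by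
  unfold pv
  split
  · exact (σ _).isLt
  · omega

theorem pv_eq {n : ℕ} (σ : Equiv.Perm (Fin n)) {i : ℕ} (h1 : 1 ≤ i) (h2 : i ≤ n) :
    pv σ i = (σ ⟨i - 1, by omega⟩ : ℕ) + 1 := by
  unfold pv; rw [dif_pos ⟨h1, h2⟩]

theorem pv_inj {n : ℕ} (σ : Equiv.Perm (Fin n)) {i j : ℕ} (hi : i ≤ n) (hj : j ≤ n)
    (h : pv σ i = pv σ j) : i = j := by
  rcases Nat.eq_zero_or_pos i with hi0 | hi1
  · subst hi0
    rcases Nat.eq_zero_or_pos j with hj0 | hj1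
    · omega
    · rw [pv_zero, pv_eq σ hj1 hj] at h; omega
  · rcases Nat.eq_zero_or_pos j with hj0 | hj1
    · subst hj0; rw [pv_zero, pv_eq σ hi1 hi] at h; omega
    · rw [pv_eq σ hi1 hi, pv_eq σ hj1 hj] at h
      have := σ.injective (a₁ := ⟨i - 1, by omega⟩) (a₂ := ⟨j - 1, by omega⟩)
        (Fin.ext (by omega))
      have := Fin.mk.inj_iff.mp this
      omega

-- extension of a perm to Fin (n+1) fixing last
def extLast {n : ℕ} (σ : Equiv.Perm (Fin n)) : Equiv.Perm (Fin (n + 1)) :=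
  (finSuccEquivLast.permCongr).symm σ.optionCongr

@[simp] theorem extLast_castSucc {n : ℕ} (σ : Equiv.Perm (Fin n)) (k : Fin n) :
    extLast σ (Fin.castSucc k) = Fin.castSucc (σ k) := by
  simp [extLast, Equiv.permCongr_apply]

@[simp] theorem extLast_last {n : ℕ} (σ : Equiv.Perm (Fin n)) :
    extLast σ (Fin.last n) = Fin.last n := by
  simp [extLast, Equiv.permCongr_apply]

-- the shift cycle: dPerm i : k ↦ k (k<i), i ↦ last, k ↦ k-1 (k>i)
def dPerm {n : ℕ} (i : Fin (n + 1)) : Equiv.Perm (Fin (n + 1)) :=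
  (Fin.revPerm.trans (i.rev.cycleRange : Equiv.Perm (Fin (n+1)))).trans Fin.revPerm

theorem dPerm_of_lt {n : ℕ} {i k : Fin (n + 1)} (h : k < i) : dPerm i k = k := by
  simp only [dPerm, Equiv.trans_apply, Fin.revPerm_apply]
  rw [Fin.cycleRange_of_gt (by rwa [Fin.rev_lt_rev])]
  exact Fin.rev_rev k

theorem dPerm_self {n : ℕ} (i : Fin (n + 1)) : dPerm i i = Fin.last n := by
  simp only [dPerm, Equiv.trans_apply, Fin.revPerm_apply]
  rw [Fin.cycleRange_self]
  simp [Fin.rev_eq_iff]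

theorem dPerm_of_gt {n : ℕ} {i k : Fin (n + 1)} (h : i < k) :
    ((dPerm i k : Fin (n+1)) : ℕ) = (k : ℕ) - 1 := by
  simp only [dPerm, Equiv.trans_apply, Fin.revPerm_apply]
  rw [Fin.cycleRange_of_lt (by rwa [Fin.rev_lt_rev])]
  have hk : (k : ℕ) ≥ 1 := by
    have := Fin.lt_iff_val_lt_val.mp h; omega
  have hrev : ((k.rev + 1 : Fin (n+1)) : ℕ) = (k.rev : ℕ) + 1 := by
    rw [Fin.val_add_one_of_lt]
    rw [Fin.lt_iff_val_lt_val]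
    simp [Fin.val_rev]
    have := Fin.lt_iff_val_lt_val.mp h
    have h0 : ((0 : Fin (n+1)) : ℕ) = 0 := by simp
    omega
  rw [Fin.val_rev, hrev, Fin.val_rev]
  omega

-- word insertion: insert value "last" at slot i
def wIns {n : ℕ} (i : Fin (n + 1)) (σ : Equiv.Perm (Fin n)) : Equiv.Perm (Fin (n + 1)) :=
  (extLast σ) * (dPerm i)

theorem wIns_apply_lt {n : ℕ} (i : Fin (n+1)) (σ : Equiv.Perm (Fin n)) {k : Fin (n+1)}
    (h : k < i) : wIns i σ k = Fin.castSucc (σ ⟨(k : ℕ), by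
      have := Fin.lt_iff_val_lt_val.mp h; have := i.isLt; omega⟩) := by
  have hk : (k:ℕ) < n := by have := Fin.lt_iff_val_lt_val.mp h; have := i.isLt; omega
  have h2 := extLast_castSucc σ ⟨(k:ℕ), hk⟩
  rw [show (Fin.castSucc (⟨(k:ℕ), hk⟩ : Fin n)) = k from Fin.ext (by simp)] at h2
  rw [wIns, Equiv.Perm.mul_apply, dPerm_of_lt h, h2]

theorem wIns_apply_self {n : ℕ} (i : Fin (n+1)) (σ : Equiv.Perm (Fin n)) :
    wIns i σ i = Fin.last n := by
  rw [wIns, Equiv.Perm.mul_apply, dPerm_self, extLast_last]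

theorem wIns_apply_gt {n : ℕ} (i : Fin (n+1)) (σ : Equiv.Perm (Fin n)) {k : Fin (n+1)}
    (h : i < k) : wIns i σ k = Fin.castSucc (σ ⟨(k : ℕ) - 1, by
      have := k.isLt; have := Fin.lt_iff_val_lt_val.mp h; omega⟩) := by
  have hd := dPerm_of_gt (i := i) h
  have : dPerm i k = Fin.castSucc ⟨(k:ℕ) - 1, by
      have := k.isLt; have := Fin.lt_iff_val_lt_val.mp h; omega⟩ := by
    apply Fin.ext; simpa using hd
  rw [wIns, Equiv.Perm.mul_apply, this, extLast_castSucc]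

-- pv of inserted perm
theorem pv_wIns_le {n : ℕ} (i : Fin (n+1)) (σ : Equiv.Perm (Fin n)) {s : ℕ}
    (h : s ≤ (i : ℕ)) : pv (wIns i σ) s = pv σ s := by
  rcases Nat.eq_zero_or_pos s with h0 | h1
  · subst h0; rw [pv_zero, pv_zero]
  · have hsn : s ≤ n := by have := i.isLt; omega
    rw [pv_eq _ h1 (by omega), pv_eq _ h1 hsn]
    have hlt : (⟨s - 1, by omega⟩ : Fin (n+1)) < i := by
      rw [Fin.lt_iff_val_lt_val]; simp; omega
    rw [wIns_apply_lt i σ hlt]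
    simp

theorem pv_wIns_self {n : ℕ} (i : Fin (n+1)) (σ : Equiv.Perm (Fin n)) :
    pv (wIns i σ) ((i : ℕ) + 1) = n + 1 := by
  rw [pv_eq _ (by omega) (by have := i.isLt; omega)]
  have : (⟨(i:ℕ) + 1 - 1, by have := i.isLt; omega⟩ : Fin (n+1)) = i := by
    simp [Fin.ext_iff]
  rw [this, wIns_apply_self]
  simp

theorem pv_wIns_ge {n : ℕ} (i : Fin (n+1)) (σ : Equiv.Perm (Fin n)) {s : ℕ}
    (h : (i : ℕ) + 2 ≤ s) (h2 : s ≤ n + 1) : pv (wIns i σ) s = pv σ (s - 1) := by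
  rw [pv_eq _ (by omega) h2, pv_eq _ (by omega) (by omega)]
  have hgt : i < (⟨s - 1, by omega⟩ : Fin (n+1)) := by
    rw [Fin.lt_iff_val_lt_val]; simp; omega
  rw [wIns_apply_gt i σ hgt]
  simp

theorem wIns_bijective {n : ℕ} :
    Function.Bijective (fun p : Fin (n+1) × Equiv.Perm (Fin n) => wIns p.1 p.2) := by
  rw [Fintype.bijective_iff_injective_and_card]
  constructor
  · rintro ⟨i, σ⟩ ⟨j, τ⟩ h
    simp only at h
    have hij : i = j := by
      have h1 : wIns i σ i = Fin.last n := wIns_apply_self i σ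
      have h2 : wIns j τ j = Fin.last n := wIns_apply_self j τ
      have : wIns i σ i = wIns i σ j := by rw [h, h2, ← h1, h]
      exact (wIns i σ).injective this
    subst hij
    have hστ : σ = τ := by
      apply Equiv.ext
      intro k
      by_cases hk : (Fin.castSucc k) < i
      · have e1 := wIns_apply_lt i σ hk
        have e2 := wIns_apply_lt i τ hk
        rw [h] at e1
        rw [e1] at e2
        have h3 := Fin.castSucc_injective _ e2
        have harg : (⟨((Fin.castSucc k : Fin (n+1)) : ℕ), by
            have := Fin.lt_iff_val_lt_val.mp hk; have := i.isLt; omega⟩ : Fin n) = k :=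
          Fin.ext (by simp)
        rw [harg] at h3
        exact h3
      · push_neg at hk
        have hk2 : i < Fin.castSucc k + 1 := by
          rw [Fin.lt_iff_val_lt_val]
          rw [Fin.val_add_one_of_lt (by exact Fin.castSucc_lt_last k)]
          have := Fin.le_iff_val_le_val.mp hk
          simp at this ⊢
          omega
        have e1 := wIns_apply_gt i σ hk2
        have e2 := wIns_apply_gt i τ hk2
        rw [h] at e1
        rw [e1] at e2
        have h3 := Fin.castSucc_injective _ e2
        have harg : (⟨((Fin.castSucc k + 1 : Fin (n+1)) : ℕ) - 1, by
            have := k.isLt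
            rw [Fin.val_add_one_of_lt (by exact Fin.castSucc_lt_last k)]
            simp⟩ : Fin n) = k := by
          apply Fin.ext
          simp [Fin.val_add_one_of_lt (Fin.castSucc_lt_last k)]
        rw [harg] at h3
        exact h3
    rw [hστ]
  · simp [Fintype.card_perm, Nat.factorial_succ]

def cnt {n : ℕ} (σ : Equiv.Perm (Fin n)) (m : ℕ) (p : ℕ → ℕ → Prop) [DecidableRel p] : ℕ :=
  ∑ s ∈ Finset.Ioc 0 m, (if p (pv σ (s - 1)) (pv σ s) then 1 else 0)

theorem jump_eq_cnt {n : ℕ} (σ : Equiv.Perm (Fin n)) :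
    jump σ = cnt σ n (fun a b => a + 2 ≤ b) := by
  rw [jump, cnt, ← Finset.Icc_add_one_left_eq_Ioc, zero_add, Finset.card_filter]

theorem lsuc_eq_cnt {n : ℕ} (σ : Equiv.Perm (Fin n)) :
    lsuc σ = cnt σ n (fun a b => a + 1 = b) := by
  rw [lsuc, cnt, ← Finset.Icc_add_one_left_eq_Ioc, zero_add, Finset.card_filter]

theorem cnt_wIns {n : ℕ} (p : ℕ → ℕ → Prop) [DecidableRel p]
    (hp0 : ∀ a, ¬ p a 0) (hbig : ∀ b, b ≤ n → ¬ p (n + 1) b)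
    (i : Fin (n+1)) (σ : Equiv.Perm (Fin n)) :
    cnt (wIns i σ) (n+1) p + (if p (pv σ (i : ℕ)) (pv σ ((i : ℕ) + 1)) then 1 else 0)
    = cnt σ n p + (if p (pv σ (i : ℕ)) (n + 1) then 1 else 0) := by
  set I : ℕ := (i : ℕ) with hI
  have hIn : I ≤ n := by have := i.isLt; omega
  set σ' := wIns i σ with hσ'
  set F : ℕ → ℕ := fun s => if p (pv σ' (s - 1)) (pv σ' s) then 1 else 0 with hF
  set G : ℕ → ℕ := fun s => if p (pv σ (s - 1)) (pv σ s) then 1 else 0 with hG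
  have hFG : ∀ s ∈ Finset.Ioc 0 I, F s = G s := by
    intro s hs
    rw [Finset.mem_Ioc] at hs
    rw [hF, hG]
    simp only
    rw [pv_wIns_le i σ (by omega), pv_wIns_le i σ (by omega)]
  have hFI1 : F (I + 1) = (if p (pv σ I) (n + 1) then 1 else 0) := by
    rw [hF]; simp only
    rw [show I + 1 - 1 = I from rfl, pv_wIns_le i σ (le_refl I), pv_wIns_self]
  have hsplit1 : (∑ s ∈ Finset.Ioc 0 I, F s) + (∑ s ∈ Finset.Ioc I (n+1), F s)
      = cnt σ' (n+1) p := by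
    rw [cnt]
    exact Finset.sum_Ioc_consecutive _ (by omega) (by omega)
  have hpeel : ∀ (a b : ℕ) (f : ℕ → ℕ), a < b →
      (∑ s ∈ Finset.Ioc a b, f s) = f (a+1) + ∑ s ∈ Finset.Ioc (a+1) b, f s := by
    intro a b f hab
    rw [← Finset.sum_Ioc_consecutive f (by omega : a ≤ a + 1) (by omega : a + 1 ≤ b)]
    congr 1
    rw [show Finset.Ioc a (a+1) = {a+1} by rw [← Finset.Icc_add_one_left_eq_Ioc, Finset.Icc_self]]
    simp
  -- reindex the tail
  have htail : (∑ s ∈ Finset.Ioc (I+1) (n+1), F s) = ∑ t ∈ Finset.Ioc I n, F (t+1) := by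
    apply Finset.sum_nbij' (i := fun s => s - 1) (j := fun t => t + 1)
    · intro a ha; rw [Finset.mem_Ioc] at *; omega
    · intro a ha; rw [Finset.mem_Ioc] at *; omega
    · intro a ha; rw [Finset.mem_Ioc] at ha; omega
    · intro a ha; omega
    · intro a ha
      rw [Finset.mem_Ioc] at ha
      congr 1
      omega
  have htailval : ∀ t ∈ Finset.Ioc (I+1) n, F (t + 1) = G t := by
    intro t ht
    rw [Finset.mem_Ioc] at ht
    rw [hF, hG]
    simp only
    rw [show t + 1 - 1 = t from rfl,
        pv_wIns_ge i σ (by omega) (by omega),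
        pv_wIns_ge i σ (by omega) (by omega)]
    congr 2
  by_cases hcase : I = n
  · -- Ioc I n empty
    have e1 : (∑ s ∈ Finset.Ioc I (n+1), F s) = F (I+1) := by
      rw [hcase, show Finset.Ioc n (n+1) = {n+1} by
        rw [← Finset.Icc_add_one_left_eq_Ioc, Finset.Icc_self], Finset.sum_singleton]
    have h1 : cnt σ' (n+1) p = (∑ s ∈ Finset.Ioc 0 I, G s) + (if p (pv σ I) (n+1) then 1 else 0) := by
      rw [← hsplit1, Finset.sum_congr rfl hFG, e1, hFI1]
    have h2 : cnt σ n p = ∑ s ∈ Finset.Ioc 0 I, G s := by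
      rw [cnt, hcase]
    have h3 : (if p (pv σ I) (pv σ (I + 1)) then 1 else 0) = 0 := by
      rw [show pv σ (I+1) = 0 from by rw [hcase]; exact pv_of_big σ (by omega),
        if_neg (hp0 _)]
    rw [h1, h2, h3, Nat.add_zero]
  · have hIlt : I < n := by omega
    have hmid : F (I + 1 + 1) = 0 := by
      rw [hF]; simp only
      rw [show I + 1 + 1 - 1 = I + 1 from rfl, pv_wIns_self,
        pv_wIns_ge i σ (by omega) (by omega)]
      rw [show I + 1 + 1 - 1 = I + 1 from rfl, if_neg (hbig _ (pv_le σ (I+1)))]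
    have h1 : cnt σ' (n+1) p
        = (∑ s ∈ Finset.Ioc 0 I, G s) + (if p (pv σ I) (n+1) then 1 else 0)
          + ∑ t ∈ Finset.Ioc (I+1) n, G t := by
      rw [← hsplit1, Finset.sum_congr rfl hFG, hpeel I (n+1) F (by omega), htail,
          hpeel I n _ hIlt, hmid, Finset.sum_congr rfl htailval, hFI1]
      ring
    have h2 : cnt σ n p = (∑ s ∈ Finset.Ioc 0 I, G s) + G (I+1)
        + ∑ t ∈ Finset.Ioc (I+1) n, G t := by
      rw [cnt, ← Finset.sum_Ioc_consecutive G (by omega : 0 ≤ I) (by omega : I ≤ n),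
          hpeel I n G hIlt]
      ring
    have h3 : G (I + 1) = (if p (pv σ I) (pv σ (I+1)) then 1 else 0) := by
      simp only [hG, Nat.add_sub_cancel]
    rw [h1, h2, h3]
    ring

open MvPolynomial

noncomputable def stepPoly (a b m : ℕ) : MvPolynomial (Fin 2) ℤ :=
  X 0 ^ a * X 1 ^ (b + 1) + a • (X 0 ^ a * X 1 ^ b) + b • (X 0 ^ (a + 1) * X 1 ^ (b - 1))
    + (m - a - b) • (X 0 ^ (a + 1) * X 1 ^ b)

theorem stat_le {n : ℕ} (p q : ℕ → Prop) [DecidablePred p]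
    [DecidablePred q] (h : ∀ i, ¬ (p i ∧ q i)) :
    ((Finset.Icc 1 n).filter p).card + ((Finset.Icc 1 n).filter q).card ≤ n := by
  rw [← Finset.card_union_of_disjoint]
  · calc _ ≤ (Finset.Icc 1 n).card := Finset.card_le_card (by
        intro a ha
        rw [Finset.mem_union, Finset.mem_filter, Finset.mem_filter] at ha
        rcases ha with h | h <;> exact h.1)
    _ = n := by rw [Nat.card_Icc]; omega
  · rw [Finset.disjoint_filter]
    intro a _ hp hq
    exact h a ⟨hp, hq⟩

theorem jump_add_lsuc_le {n : ℕ} (σ : Equiv.Perm (Fin n)) : jump σ + lsuc σ ≤ n := by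
  rw [jump, lsuc]
  exact stat_le _ _ (by intro i; omega)

theorem exc_add_fixpt_le {n : ℕ} (σ : Equiv.Perm (Fin n)) : exc σ + fixpt σ ≤ n := by
  rw [exc, fixpt]
  exact stat_le _ _ (by intro i; omega)

theorem card_top_pos {n : ℕ} (σ : Equiv.Perm (Fin n)) :
    ((Finset.range (n+1)).filter (fun s => pv σ s = n)).card = 1 := by
  rw [Finset.card_eq_one]
  rcases Nat.eq_zero_or_pos n with h0 | h1
  · refine ⟨0, ?_⟩
    ext a
    simp only [Finset.mem_filter, Finset.mem_range, Finset.mem_singleton]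
    subst h0
    constructor
    · rintro ⟨ha, _⟩; omega
    · rintro rfl; exact ⟨by omega, pv_zero σ⟩
  · refine ⟨((σ.symm ⟨n - 1, by omega⟩ : Fin n) : ℕ) + 1, ?_⟩
    have hlt := (σ.symm (⟨n - 1, by omega⟩ : Fin n)).isLt
    have hs : pv σ (((σ.symm ⟨n - 1, by omega⟩ : Fin n) : ℕ) + 1) = n := by
      rw [pv_eq σ (by omega) (by omega)]
      simp only [Nat.add_sub_cancel, Fin.eta]
      rw [Equiv.apply_symm_apply]
      show n - 1 + 1 = n
      omega
    ext a
    simp only [Finset.mem_filter, Finset.mem_range, Finset.mem_singleton]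
    constructor
    · rintro ⟨ha, hpa⟩
      exact pv_inj σ (by omega) (by omega) (by rw [hpa, hs])
    · rintro rfl
      exact ⟨by omega, hs⟩

theorem card_shift {n : ℕ} (σ : Equiv.Perm (Fin n)) (p : ℕ → ℕ → Prop) [DecidableRel p]
    (hp0 : ∀ a, ¬ p a 0) :
    ((Finset.range (n+1)).filter (fun s => p (pv σ s) (pv σ (s+1)))).card
    = ((Finset.Icc 1 n).filter (fun s => p (pv σ (s-1)) (pv σ s))).card := by
  apply Finset.card_nbij (i := fun s => s + 1)
  · intro a ha
    simp only [Finset.mem_coe, Finset.mem_filter, Finset.mem_range] at ha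
    simp only [Finset.mem_coe, Finset.mem_filter, Finset.mem_Icc]
    have h1 : a + 1 ≤ n := by
      by_contra hc
      have : pv σ (a + 1) = 0 := pv_of_big σ (by omega)
      rw [this] at ha
      exact hp0 _ ha.2
    exact ⟨⟨by omega, h1⟩, by simpa using ha.2⟩
  · intro a ha b hb hab
    simp only at hab
    omega
  · intro t ht
    simp only [Finset.coe_filter, Set.mem_setOf_eq, Finset.mem_Icc] at ht
    refine ⟨t - 1, ?_, by simp only; omega⟩
    simp only [Finset.coe_filter, Set.mem_setOf_eq, Finset.mem_range]
    refine ⟨by omega, ?_⟩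
    rw [show t - 1 + 1 = t by omega]
    exact ht.2

open Fin.NatCast in
theorem innerA {n : ℕ} (σ : Equiv.Perm (Fin n)) :
    ∑ i : Fin (n+1), (X 0 ^ jump (wIns i σ) * X 1 ^ lsuc (wIns i σ)
      : MvPolynomial (Fin 2) ℤ)
    = stepPoly (jump σ) (lsuc σ) n := by
  classical
  set j := jump σ with hj
  set l := lsuc σ with hl
  have hjl : j + l ≤ n := jump_add_lsuc_le σ
  set base : MvPolynomial (Fin 2) ℤ := X 0 ^ (j+1) * X 1 ^ l with hbase
  set tZ : MvPolynomial (Fin 2) ℤ := X 0 ^ j * X 1 ^ (l+1) with htZ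
  set tJ : MvPolynomial (Fin 2) ℤ := X 0 ^ j * X 1 ^ l with htJ
  set tL : MvPolynomial (Fin 2) ℤ := X 0 ^ (j+1) * X 1 ^ (l-1) with htL
  have hco : ∀ i : Fin (n+1), (X 0 ^ jump (wIns i σ) * X 1 ^ lsuc (wIns i σ)
      : MvPolynomial (Fin 2) ℤ)
      = (fun s : ℕ => (X 0 ^ jump (wIns (s : Fin (n+1)) σ) * X 1 ^ lsuc (wIns (s : Fin (n+1)) σ)
      : MvPolynomial (Fin 2) ℤ)) (i : ℕ) := by
    intro i
    simp [Fin.cast_val_eq_self]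
  rw [Finset.sum_congr rfl (fun i _ => hco i), Fin.sum_univ_eq_sum_range
    (fun s : ℕ => (X 0 ^ jump (wIns (s : Fin (n+1)) σ) * X 1 ^ lsuc (wIns (s : Fin (n+1)) σ)
      : MvPolynomial (Fin 2) ℤ)) (n+1)]
  have key : ∀ s ∈ Finset.range (n+1),
      (X 0 ^ jump (wIns (s : Fin (n+1)) σ) * X 1 ^ lsuc (wIns (s : Fin (n+1)) σ)
        : MvPolynomial (Fin 2) ℤ)
      = base + ((if pv σ s = n then tZ - base else 0)
        + ((if pv σ s + 2 ≤ pv σ (s+1) then tJ - base else 0)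
        + (if pv σ s + 1 = pv σ (s+1) then tL - base else 0))) := by
    intro s hs
    rw [Finset.mem_range] at hs
    have hval : (((s : ℕ) : Fin (n+1)) : ℕ) = s := by
      rw [Fin.val_natCast]; exact Nat.mod_eq_of_lt hs
    have hbJ := cnt_wIns (fun a b => a + 2 ≤ b) (by intro a; omega)
      (by intro b hb; omega) (s : Fin (n+1)) σ
    have hbL := cnt_wIns (fun a b => a + 1 = b) (by intro a; omega)
      (by intro b hb; omega) (s : Fin (n+1)) σ
    rw [hval] at hbJ hbL
    rw [← jump_eq_cnt, ← jump_eq_cnt, ← hj] at hbJ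
    rw [← lsuc_eq_cnt, ← lsuc_eq_cnt, ← hl] at hbL
    have hA := pv_le σ s
    have hB := pv_le σ (s+1)
    by_cases hZ : pv σ s = n
    · have h1 : ¬ (pv σ s + 2 ≤ pv σ (s+1)) := by omega
      have h2 : ¬ (pv σ s + 1 = pv σ (s+1)) := by omega
      rw [if_neg h1, if_neg (by omega : ¬ (pv σ s + 2 ≤ n + 1))] at hbJ
      rw [if_neg h2, if_pos (by omega : pv σ s + 1 = n + 1)] at hbL
      rw [if_pos hZ, if_neg h1, if_neg h2,
        (by omega : jump (wIns (s : Fin (n+1)) σ) = j),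
        (by omega : lsuc (wIns (s : Fin (n+1)) σ) = l + 1)]
      ring
    · have hn1 : pv σ s + 2 ≤ n + 1 := by omega
      by_cases hJ : pv σ s + 2 ≤ pv σ (s+1)
      · have h2 : ¬ (pv σ s + 1 = pv σ (s+1)) := by omega
        rw [if_pos hJ, if_pos hn1] at hbJ
        rw [if_neg h2, if_neg (by omega : ¬ (pv σ s + 1 = n + 1))] at hbL
        rw [if_neg hZ, if_pos hJ, if_neg h2,
          (by omega : jump (wIns (s : Fin (n+1)) σ) = j),
          (by omega : lsuc (wIns (s : Fin (n+1)) σ) = l)]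
        ring
      · by_cases hL : pv σ s + 1 = pv σ (s+1)
        · rw [if_neg hJ, if_pos hn1] at hbJ
          rw [if_pos hL, if_neg (by omega : ¬ (pv σ s + 1 = n + 1))] at hbL
          rw [if_neg hZ, if_neg hJ, if_pos hL,
            (by omega : jump (wIns (s : Fin (n+1)) σ) = j + 1),
            (by omega : lsuc (wIns (s : Fin (n+1)) σ) = l - 1)]
          ring
        · rw [if_neg hJ, if_pos hn1] at hbJ
          rw [if_neg hL, if_neg (by omega : ¬ (pv σ s + 1 = n + 1))] at hbL
          rw [if_neg hZ, if_neg hJ, if_neg hL,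
            (by omega : jump (wIns (s : Fin (n+1)) σ) = j + 1),
            (by omega : lsuc (wIns (s : Fin (n+1)) σ) = l)]
          ring
  rw [Finset.sum_congr rfl key]
  rw [Finset.sum_add_distrib, Finset.sum_add_distrib, Finset.sum_add_distrib]
  rw [Finset.sum_const, Finset.card_range]
  rw [← Finset.sum_filter, ← Finset.sum_filter, ← Finset.sum_filter]
  rw [Finset.sum_const, Finset.sum_const, Finset.sum_const]
  rw [card_top_pos σ]
  rw [card_shift σ (fun a b => a + 2 ≤ b) (by intro a; omega)]
  rw [card_shift σ (fun a b => a + 1 = b) (by intro a; omega)]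
  rw [← jump, ← lsuc, ← hj, ← hl]
  rw [show n + 1 = 1 + j + l + (n - j - l) by omega, add_smul, add_smul, add_smul, one_smul]
  rw [stepPoly, ← htZ, ← htJ, ← htL, ← hbase]
  simp only [smul_sub, one_smul]
  abel

def cIns {n : ℕ} (i : Fin (n + 1)) (σ : Equiv.Perm (Fin n)) : Equiv.Perm (Fin (n + 1)) :=
  (Equiv.swap i (Fin.last n)) * extLast σ

theorem cIns_apply_last {n : ℕ} (i : Fin (n+1)) (σ : Equiv.Perm (Fin n)) :
    cIns i σ (Fin.last n) = i := by
  rw [cIns, Equiv.Perm.mul_apply, extLast_last, Equiv.swap_apply_right]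

theorem cIns_apply_castSucc {n : ℕ} (i : Fin (n+1)) (σ : Equiv.Perm (Fin n)) (k : Fin n) :
    cIns i σ (Fin.castSucc k) = Equiv.swap i (Fin.last n) (Fin.castSucc (σ k)) := by
  rw [cIns, Equiv.Perm.mul_apply, extLast_castSucc]

theorem cIns_bijective {n : ℕ} :
    Function.Bijective (fun p : Fin (n+1) × Equiv.Perm (Fin n) => cIns p.1 p.2) := by
  rw [Fintype.bijective_iff_injective_and_card]
  constructor
  · rintro ⟨i, σ⟩ ⟨j, τ⟩ h
    simp only at h
    have hij : i = j := by
      rw [← cIns_apply_last i σ, ← cIns_apply_last j τ, h]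
    subst hij
    have : extLast σ = extLast τ := by
      have := congrArg (fun ρ => (Equiv.swap i (Fin.last n)) * ρ) h
      simpa [cIns, ← mul_assoc] using this
    have hστ : σ = τ := by
      apply Equiv.ext
      intro k
      have h2 := congrArg (fun ρ => ρ (Fin.castSucc k)) this
      simp only [extLast_castSucc] at h2
      exact Fin.castSucc_injective _ h2
    rw [hστ]
  · simp [Fintype.card_perm, Nat.factorial_succ]

theorem exc_eq_card_fin {n : ℕ} (σ : Equiv.Perm (Fin n)) :
    exc σ = (Finset.univ.filter (fun k : Fin n => (k : ℕ) < (σ k : ℕ))).card := by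
  rw [exc]
  symm
  refine Finset.card_nbij (fun k => (k : ℕ) + 1) ?_ ?_ ?_
  · intro k hk
    simp only [Finset.mem_coe, Finset.mem_filter, Finset.mem_univ, true_and] at hk
    simp only [Finset.mem_coe, Finset.mem_filter, Finset.mem_Icc]
    have := k.isLt
    refine ⟨⟨by omega, by omega⟩, ?_⟩
    rw [pv_eq σ (by omega) (by omega)]
    simp only [Nat.add_sub_cancel, Fin.eta]
    omega
  · intro a _ b _ hab
    simp only at hab
    exact Fin.ext (by omega)
  · intro t ht
    simp only [Finset.coe_filter, Set.mem_setOf_eq, Finset.mem_Icc] at ht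
    obtain ⟨⟨h1, h2⟩, h3⟩ := ht
    refine ⟨⟨t - 1, by omega⟩, ?_, by simp only; omega⟩
    simp only [Finset.coe_filter, Set.mem_setOf_eq, Finset.mem_univ, true_and]
    rw [pv_eq σ h1 h2] at h3
    have hv : (((⟨t - 1, by omega⟩ : Fin n)) : ℕ) = t - 1 := rfl
    omega

theorem fixpt_eq_card_fin {n : ℕ} (σ : Equiv.Perm (Fin n)) :
    fixpt σ = (Finset.univ.filter (fun k : Fin n => σ k = k)).card := by
  rw [fixpt]
  symm
  refine Finset.card_nbij (fun k => (k : ℕ) + 1) ?_ ?_ ?_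
  · intro k hk
    simp only [Finset.mem_coe, Finset.mem_filter, Finset.mem_univ, true_and] at hk
    simp only [Finset.mem_coe, Finset.mem_filter, Finset.mem_Icc]
    have := k.isLt
    refine ⟨⟨by omega, by omega⟩, ?_⟩
    rw [pv_eq σ (by omega) (by omega)]
    simp only [Nat.add_sub_cancel, Fin.eta]
    rw [hk]
  · intro a _ b _ hab
    simp only at hab
    exact Fin.ext (by omega)
  · intro t ht
    simp only [Finset.coe_filter, Set.mem_setOf_eq, Finset.mem_Icc] at ht
    obtain ⟨⟨h1, h2⟩, h3⟩ := ht
    refine ⟨⟨t - 1, by omega⟩, ?_, by simp only; omega⟩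
    simp only [Finset.coe_filter, Set.mem_setOf_eq, Finset.mem_univ, true_and]
    rw [pv_eq σ h1 h2] at h3
    apply Fin.ext
    have hv : (((⟨t - 1, by omega⟩ : Fin n)) : ℕ) = t - 1 := rfl
    omega

theorem exc_cIns_last {n : ℕ} (σ : Equiv.Perm (Fin n)) :
    exc (cIns (Fin.last n) σ) = exc σ := by
  rw [exc_eq_card_fin, exc_eq_card_fin, Finset.card_filter, Finset.card_filter,
    Fin.sum_univ_castSucc]
  have h2 : (if ((Fin.last n : Fin (n+1)) : ℕ) < ((cIns (Fin.last n) σ (Fin.last n)) : ℕ)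
      then 1 else 0) = 0 := by
    rw [cIns_apply_last]
    simp
  rw [h2, add_zero]
  apply Finset.sum_congr rfl
  intro k _
  rw [cIns_apply_castSucc, Equiv.swap_self, Equiv.refl_apply]
  simp only [Fin.coe_castSucc]

theorem fixpt_cIns_last {n : ℕ} (σ : Equiv.Perm (Fin n)) :
    fixpt (cIns (Fin.last n) σ) = fixpt σ + 1 := by
  rw [fixpt_eq_card_fin, fixpt_eq_card_fin, Finset.card_filter, Finset.card_filter,
    Fin.sum_univ_castSucc]
  have h2 : (if (cIns (Fin.last n) σ (Fin.last n)) = Fin.last n then 1 else 0) = 1 := by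
    rw [cIns_apply_last, if_pos rfl]
  rw [h2]
  congr 1
  apply Finset.sum_congr rfl
  intro k _
  rw [cIns_apply_castSucc, Equiv.swap_self, Equiv.refl_apply]
  by_cases h : σ k = k
  · rw [if_pos (by rw [h]), if_pos h]
  · rw [if_neg (by intro hc; exact h (Fin.castSucc_injective _ hc)), if_neg h]

theorem exc_cIns_some {n : ℕ} (σ : Equiv.Perm (Fin n)) (p : Fin n) :
    exc (cIns (Fin.castSucc p) σ) + (if ((σ.symm p : Fin n) : ℕ) < (p : ℕ) then 1 else 0)
    = exc σ + 1 := by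
  set k0 : Fin n := σ.symm p with hk0
  have hp : σ k0 = p := Equiv.apply_symm_apply σ p
  rw [exc_eq_card_fin, exc_eq_card_fin, Finset.card_filter, Finset.card_filter,
    Fin.sum_univ_castSucc]
  have h2 : (if ((Fin.last n : Fin (n+1)) : ℕ) < ((cIns (Fin.castSucc p) σ (Fin.last n)) : ℕ)
      then 1 else 0) = 0 := by
    rw [cIns_apply_last, if_neg]
    simp only [Fin.coe_castSucc, Fin.val_last]
    have := p.isLt
    omega
  rw [h2, add_zero]
  have hpoint : ∀ k : Fin n,
      (if ((Fin.castSucc k : Fin (n+1)) : ℕ) < ((cIns (Fin.castSucc p) σ (Fin.castSucc k)) : ℕ)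
        then 1 else 0) + (if k = k0 then (if (k0 : ℕ) < (σ k0 : ℕ) then 1 else 0) else 0)
      = (if (k : ℕ) < (σ k : ℕ) then 1 else 0) + (if k = k0 then 1 else 0) := by
    intro k
    by_cases hkk : k = k0
    · rw [if_pos hkk, if_pos hkk]
      have hσk : σ k = p := by rw [hkk, hp]
      have hterm : (if ((Fin.castSucc k : Fin (n+1)) : ℕ)
          < ((cIns (Fin.castSucc p) σ (Fin.castSucc k)) : ℕ) then 1 else 0) = 1 := by
        rw [cIns_apply_castSucc, hσk, Equiv.swap_apply_left, if_pos]
        simp only [Fin.coe_castSucc, Fin.val_last]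
        exact k.isLt
      rw [hterm, hkk]
      exact Nat.add_comm _ _
    · rw [if_neg hkk, if_neg hkk, add_zero, add_zero]
      have hne : σ k ≠ p := by
        intro hc
        exact hkk (by rw [hk0, ← hc, Equiv.symm_apply_apply])
      rw [cIns_apply_castSucc, Equiv.swap_apply_of_ne_of_ne
        (by simpa [Fin.castSucc_inj] using hne) (Fin.ne_of_lt (Fin.castSucc_lt_last _))]
      simp only [Fin.coe_castSucc]
  have hsum := Finset.sum_congr rfl (fun k (_ : k ∈ Finset.univ) => hpoint k)
  rw [Finset.sum_add_distrib, Finset.sum_add_distrib, Finset.sum_ite_eq' Finset.univ k0,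
    Finset.sum_ite_eq' Finset.univ k0, if_pos (Finset.mem_univ k0),
    if_pos (Finset.mem_univ k0)] at hsum
  have hx : (if (k0 : ℕ) < (p : ℕ) then 1 else 0)
      = (if (k0 : ℕ) < (σ k0 : ℕ) then 1 else 0) := by rw [hp]
  rw [hx]
  omega

theorem fixpt_cIns_some {n : ℕ} (σ : Equiv.Perm (Fin n)) (p : Fin n) :
    fixpt (cIns (Fin.castSucc p) σ) + (if σ.symm p = p then 1 else 0) = fixpt σ := by
  set k0 : Fin n := σ.symm p with hk0
  have hp : σ k0 = p := Equiv.apply_symm_apply σ p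
  rw [fixpt_eq_card_fin, fixpt_eq_card_fin, Finset.card_filter, Finset.card_filter,
    Fin.sum_univ_castSucc]
  have h2 : (if (cIns (Fin.castSucc p) σ (Fin.last n)) = Fin.last n then 1 else 0) = 0 := by
    rw [cIns_apply_last, if_neg (Fin.ne_of_lt (Fin.castSucc_lt_last _))]
  rw [h2, add_zero]
  have hpoint : ∀ k : Fin n,
      (if cIns (Fin.castSucc p) σ (Fin.castSucc k) = Fin.castSucc k then 1 else 0)
        + (if k = k0 then (if σ k0 = k0 then 1 else 0) else 0)
      = (if σ k = k then 1 else 0) + 0 := by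
    intro k
    by_cases hkk : k = k0
    · rw [if_pos hkk]
      have hσk : σ k = p := by rw [hkk, hp]
      have hterm : (if cIns (Fin.castSucc p) σ (Fin.castSucc k) = Fin.castSucc k
          then 1 else 0) = 0 := by
        rw [cIns_apply_castSucc, hσk, Equiv.swap_apply_left,
          if_neg (Fin.ne_of_gt (Fin.castSucc_lt_last _))]
      have hfix : (if σ k = k then (1:ℕ) else 0) = (if σ k0 = k0 then 1 else 0) := by
        rw [hkk]
      rw [hterm, hfix, zero_add, add_zero]
    · rw [if_neg hkk, add_zero, add_zero]
      have hne : σ k ≠ p := by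
        intro hc
        exact hkk (by rw [hk0, ← hc, Equiv.symm_apply_apply])
      rw [cIns_apply_castSucc, Equiv.swap_apply_of_ne_of_ne
        (by simpa [Fin.castSucc_inj] using hne) (Fin.ne_of_lt (Fin.castSucc_lt_last _))]
      by_cases h : σ k = k
      · rw [if_pos (by rw [h]), if_pos h]
      · rw [if_neg (by intro hc; exact h (Fin.castSucc_injective _ hc)), if_neg h]
  have hsum := Finset.sum_congr rfl (fun k (_ : k ∈ Finset.univ) => hpoint k)
  rw [Finset.sum_add_distrib, Finset.sum_add_distrib, Finset.sum_ite_eq' Finset.univ k0,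
    if_pos (Finset.mem_univ k0), Finset.sum_const, smul_zero, add_zero] at hsum
  have hx : (if k0 = p then (1:ℕ) else 0) = (if σ k0 = k0 then 1 else 0) := by
    by_cases h : k0 = p
    · rw [if_pos h, if_pos (by rw [hp]; exact h.symm)]
    · rw [if_neg h, if_neg (fun hc => h ((hp.symm.trans hc)).symm)]
  rw [hx]
  omega

theorem innerB {n : ℕ} (σ : Equiv.Perm (Fin n)) :
    ∑ i : Fin (n+1), (X 0 ^ exc (cIns i σ) * X 1 ^ fixpt (cIns i σ)
      : MvPolynomial (Fin 2) ℤ)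
    = stepPoly (exc σ) (fixpt σ) n := by
  classical
  set e := exc σ with he
  set f := fixpt σ with hf
  have hef : e + f ≤ n := exc_add_fixpt_le σ
  set base : MvPolynomial (Fin 2) ℤ := X 0 ^ (e+1) * X 1 ^ f with hbase
  set tZ : MvPolynomial (Fin 2) ℤ := X 0 ^ e * X 1 ^ (f+1) with htZ
  set tJ : MvPolynomial (Fin 2) ℤ := X 0 ^ e * X 1 ^ f with htJ
  set tL : MvPolynomial (Fin 2) ℤ := X 0 ^ (e+1) * X 1 ^ (f-1) with htL
  rw [Fin.sum_univ_castSucc]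
  have hlast : (X 0 ^ exc (cIns (Fin.last n) σ) * X 1 ^ fixpt (cIns (Fin.last n) σ)
      : MvPolynomial (Fin 2) ℤ) = tZ := by
    rw [exc_cIns_last, fixpt_cIns_last, ← he, ← hf]
  have key : ∀ p : Fin n,
      (X 0 ^ exc (cIns (Fin.castSucc p) σ) * X 1 ^ fixpt (cIns (Fin.castSucc p) σ)
        : MvPolynomial (Fin 2) ℤ)
      = base + ((if ((σ.symm p : Fin n) : ℕ) < (p : ℕ) then tJ - base else 0)
        + (if σ.symm p = p then tL - base else 0)) := by
    intro p
    have hbE := exc_cIns_some σ p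
    have hbF := fixpt_cIns_some σ p
    rw [← he] at hbE
    rw [← hf] at hbF
    by_cases h1 : ((σ.symm p : Fin n) : ℕ) < (p : ℕ)
    · have h2 : σ.symm p ≠ p := by
        intro hc; rw [hc] at h1; omega
      rw [if_pos h1] at hbE
      rw [if_neg h2] at hbF
      rw [if_pos h1, if_neg h2,
        (by omega : exc (cIns (Fin.castSucc p) σ) = e),
        (by omega : fixpt (cIns (Fin.castSucc p) σ) = f)]
      ring
    · by_cases h2 : σ.symm p = p
      · rw [if_neg h1] at hbE
        rw [if_pos h2] at hbF
        rw [if_neg h1, if_pos h2,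
          (by omega : exc (cIns (Fin.castSucc p) σ) = e + 1),
          (by omega : fixpt (cIns (Fin.castSucc p) σ) = f - 1)]
        ring
      · rw [if_neg h1] at hbE
        rw [if_neg h2] at hbF
        rw [if_neg h1, if_neg h2,
          (by omega : exc (cIns (Fin.castSucc p) σ) = e + 1),
          (by omega : fixpt (cIns (Fin.castSucc p) σ) = f)]
        ring
  rw [Finset.sum_congr rfl (fun p _ => key p), hlast]
  rw [Finset.sum_add_distrib, Finset.sum_add_distrib]
  rw [Finset.sum_const, Finset.card_univ, Fintype.card_fin]
  have hsum1 : (∑ p : Fin n, (if ((σ.symm p : Fin n) : ℕ) < (p : ℕ)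
      then (tJ - base : MvPolynomial (Fin 2) ℤ) else 0))
      = e • (tJ - base) := by
    rw [← Equiv.sum_comp σ (fun p => (if ((σ.symm p : Fin n) : ℕ) < (p : ℕ)
      then (tJ - base : MvPolynomial (Fin 2) ℤ) else 0))]
    simp only [Equiv.symm_apply_apply]
    rw [← Finset.sum_filter, Finset.sum_const, ← exc_eq_card_fin, ← he]
  have hsum2 : (∑ p : Fin n, (if σ.symm p = p
      then (tL - base : MvPolynomial (Fin 2) ℤ) else 0))
      = f • (tL - base) := by
    rw [← Equiv.sum_comp σ (fun p => (if σ.symm p = p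
      then (tL - base : MvPolynomial (Fin 2) ℤ) else 0))]
    simp only [Equiv.symm_apply_apply]
    have : ∀ k : Fin n, (if k = σ k then (tL - base : MvPolynomial (Fin 2) ℤ) else 0)
        = (if σ k = k then (tL - base : MvPolynomial (Fin 2) ℤ) else 0) := by
      intro k
      by_cases h : σ k = k
      · rw [if_pos h, if_pos h.symm]
      · rw [if_neg h, if_neg (fun hc => h hc.symm)]
    rw [Finset.sum_congr rfl (fun k _ => this k), ← Finset.sum_filter,
      Finset.sum_const, ← fixpt_eq_card_fin, ← hf]
  rw [hsum1, hsum2]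
  rw [show (stepPoly e f n) = tZ + e • tJ + f • tL + (n - e - f) • base from by
    rw [stepPoly, ← htZ, ← htJ, ← htL, ← hbase]]
  rw [show (n : ℕ) • base = e • base + f • base + (n - e - f) • base from by
    rw [← add_smul, ← add_smul]; congr 1; omega]
  simp only [smul_sub]
  abel


noncomputable def Lop (n : ℕ) (Q : MvPolynomial (Fin 2) ℤ) : MvPolynomial (Fin 2) ℤ :=
  X 1 * Q + n • (X 0 * Q) + (X 0 - X 0 ^ 2) * pderiv 0 Q + (X 0 - X 0 * X 1) * pderiv 1 Q

theorem Lop_sum {n : ℕ} {α : Type*} (s : Finset α) (g : α → MvPolynomial (Fin 2) ℤ) :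
    Lop n (∑ a ∈ s, g a) = ∑ a ∈ s, Lop n (g a) := by
  unfold Lop
  rw [map_sum (pderiv 0), map_sum (pderiv 1)]
  simp only [Finset.mul_sum, Finset.smul_sum]
  rw [← Finset.sum_add_distrib, ← Finset.sum_add_distrib, ← Finset.sum_add_distrib]

theorem x_pderiv0 (a b : ℕ) :
    (X 0 : MvPolynomial (Fin 2) ℤ) * pderiv 0 (X 0 ^ a * X 1 ^ b)
    = a • (X 0 ^ a * X 1 ^ b) := by
  rw [pderiv_mul, pderiv_pow, pderiv_pow, pderiv_X_self, pderiv_X_of_ne (by decide)]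
  cases a with
  | zero => simp
  | succ a' =>
    simp only [Nat.add_sub_cancel, mul_zero, mul_one, zero_mul, add_zero, nsmul_eq_mul]
    push_cast
    ring

theorem x_pderiv1 (a b : ℕ) :
    (X 0 : MvPolynomial (Fin 2) ℤ) * pderiv 1 (X 0 ^ a * X 1 ^ b)
    = b • (X 0 ^ (a+1) * X 1 ^ (b-1)) := by
  rw [pderiv_mul, pderiv_pow, pderiv_pow, pderiv_X_self, pderiv_X_of_ne (by decide)]
  cases b with
  | zero => simp
  | succ b' =>
    simp only [Nat.add_sub_cancel, mul_zero, mul_one, zero_mul, add_zero, zero_add,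
      nsmul_eq_mul]
    push_cast
    ring

theorem Lop_mono {n a b : ℕ} (h : a + b ≤ n) :
    Lop n (X 0 ^ a * X 1 ^ b) = stepPoly a b n := by
  set M : MvPolynomial (Fin 2) ℤ := X 0 ^ a * X 1 ^ b with hM
  set B : MvPolynomial (Fin 2) ℤ := X 0 ^ (a+1) * X 1 ^ b with hB
  set T : MvPolynomial (Fin 2) ℤ := X 0 ^ (a+1) * X 1 ^ (b-1) with hT
  set A : MvPolynomial (Fin 2) ℤ := X 0 ^ a * X 1 ^ (b+1) with hA
  have e0 := x_pderiv0 a b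
  have e1 := x_pderiv1 a b
  rw [← hM] at e0
  rw [← hM, ← hT] at e1
  have h4 : (X 1 : MvPolynomial (Fin 2) ℤ) * M = A := by
    rw [hM, hA]; ring
  have h5 : (X 0 : MvPolynomial (Fin 2) ℤ) * M = B := by
    rw [hM, hB]; ring
  have h6 : (b : ℕ) • ((X 1 : MvPolynomial (Fin 2) ℤ) * T) = b • B := by
    cases b with
    | zero => simp
    | succ b' =>
      congr 1
      rw [hT, hB]
      simp only [Nat.add_sub_cancel]
      ring
  have h2 : ((X 0 : MvPolynomial (Fin 2) ℤ) - X 0 ^ 2) * pderiv 0 M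
      = a • M - a • B := by
    have hx2 : (X 0 : MvPolynomial (Fin 2) ℤ) ^ 2 * pderiv 0 M = a • B :=
      calc (X 0 : MvPolynomial (Fin 2) ℤ) ^ 2 * pderiv 0 M
          = X 0 * (X 0 * pderiv 0 M) := by ring
        _ = X 0 * (a • M) := by rw [e0]
        _ = a • (X 0 * M) := by rw [mul_smul_comm]
        _ = a • B := by rw [h5]
    rw [sub_mul, e0, hx2]
  have h3 : ((X 0 : MvPolynomial (Fin 2) ℤ) - X 0 * X 1) * pderiv 1 M
      = b • T - b • B := by
    have hx2 : (X 0 : MvPolynomial (Fin 2) ℤ) * X 1 * pderiv 1 M = b • B :=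
      calc (X 0 : MvPolynomial (Fin 2) ℤ) * X 1 * pderiv 1 M
          = X 1 * (X 0 * pderiv 1 M) := by ring
        _ = X 1 * (b • T) := by rw [e1]
        _ = b • (X 1 * T) := by rw [mul_smul_comm]
        _ = b • B := h6
    rw [sub_mul, e1, hx2]
  unfold Lop stepPoly
  rw [← hM, ← hT, ← hB, ← hA, h2, h3, h4, h5]
  rw [show n • B = a • B + b • B + (n - a - b) • B from by
    rw [← add_smul, ← add_smul]; congr 1; omega]
  abel



theorem Pstar_succ (n : ℕ) :
    Pstar (n+1) = ∑ σ : Equiv.Perm (Fin n), stepPoly (jump σ) (lsuc σ) n := by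
  rw [Pstar]
  rw [← Fintype.sum_bijective (fun p : Fin (n+1) × Equiv.Perm (Fin n) => wIns p.1 p.2)
    wIns_bijective
    (fun p => (X 0 ^ jump (wIns p.1 p.2) * X 1 ^ lsuc (wIns p.1 p.2) : MvPolynomial (Fin 2) ℤ))
    _ (fun p => rfl)]
  rw [Fintype.sum_prod_type]
  rw [Finset.sum_comm]
  exact Finset.sum_congr rfl (fun σ _ => innerA σ)

theorem Fxz_succ (n : ℕ) :
    Fxz (n+1) = ∑ σ : Equiv.Perm (Fin n), stepPoly (exc σ) (fixpt σ) n := by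
  rw [Fxz]
  rw [← Fintype.sum_bijective (fun p : Fin (n+1) × Equiv.Perm (Fin n) => cIns p.1 p.2)
    cIns_bijective
    (fun p => (X 0 ^ exc (cIns p.1 p.2) * X 1 ^ fixpt (cIns p.1 p.2) : MvPolynomial (Fin 2) ℤ))
    _ (fun p => rfl)]
  rw [Fintype.sum_prod_type]
  rw [Finset.sum_comm]
  exact Finset.sum_congr rfl (fun σ _ => innerB σ)

theorem Pstar_eq_Fxz (n : ℕ) : Pstar n = Fxz n := by
  induction n with
  | zero =>
    rw [Pstar, Fxz]
    apply Finset.sum_congr rfl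
    intro σ _
    have h1 : jump σ = 0 := by rw [jump]; simp
    have h2 : lsuc σ = 0 := by rw [lsuc]; simp
    have h3 : exc σ = 0 := by rw [exc]; simp
    have h4 : fixpt σ = 0 := by rw [fixpt]; simp
    rw [h1, h2, h3, h4]
  | succ n ih =>
    rw [Pstar_succ, Fxz_succ]
    have hA : ∀ σ : Equiv.Perm (Fin n), stepPoly (jump σ) (lsuc σ) n
        = Lop n (X 0 ^ jump σ * X 1 ^ lsuc σ) :=
      fun σ => (Lop_mono (jump_add_lsuc_le σ)).symm
    have hB : ∀ σ : Equiv.Perm (Fin n), stepPoly (exc σ) (fixpt σ) n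
        = Lop n (X 0 ^ exc σ * X 1 ^ fixpt σ) :=
      fun σ => (Lop_mono (exc_add_fixpt_le σ)).symm
    rw [Finset.sum_congr rfl (fun σ _ => hA σ), Finset.sum_congr rfl (fun σ _ => hB σ)]
    rw [← Lop_sum, ← Lop_sum, ← Pstar, ← Fxz, ih]
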